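/- arXiv:1912.11718 — 5 statements merged into one kernel-verified Lean document; each statement's English description precedes it below -/
import Mathlib

section
/- Let b ∈ ℝ and Φ_t(u,r;v,ρ) := (u−v)² − (b/2)²(4r²ρ² − (r²+ρ²−t²)²). Define the Monge–Ampère matrix M(Φ_t) as the 3×3 matrix with rows (Φ_t, ∂_vΦ_t, ∂_ρΦ_t), (∂_uΦ_t, ∂²_{uv}Φ_t, ∂²_{uρ}Φ_t), (∂_rΦ_t, ∂²_{rv}Φ_t, ∂²_{rρ}Φ_t). Then for all (u,r,t,v,ρ) with Φ_t(u,r;v,ρ) = 0, det M(Φ_t) = 4b⁴·r·t²·ρ·(t² − r² − ρ²). -/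
/-- The defining function Φ(u,r,t;v,ρ) = (u−v)² − (b/2)²(4r²ρ² − (r²+ρ²−t²)²). -/
noncomputable def Phi (b u r t v ρ : ℝ) : ℝ :=
  (u - v) ^ 2 - (b / 2) ^ 2 * (4 * r ^ 2 * ρ ^ 2 - (r ^ 2 + ρ ^ 2 - t ^ 2) ^ 2)

/-- ∂_u Φ -/
noncomputable def Pu (b u r t v ρ : ℝ) : ℝ := deriv (fun u' => Phi b u' r t v ρ) u
/-- ∂_r Φ -/
noncomputable def Pr (b u r t v ρ : ℝ) : ℝ := deriv (fun r' => Phi b u r' t v ρ) r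
/-- ∂_t Φ -/
noncomputable def Pt (b u r t v ρ : ℝ) : ℝ := deriv (fun t' => Phi b u r t' v ρ) t
/-- ∂_v Φ -/
noncomputable def Pv (b u r t v ρ : ℝ) : ℝ := deriv (fun v' => Phi b u r t v' ρ) v
/-- ∂_ρ Φ -/
noncomputable def Pp (b u r t v ρ : ℝ) : ℝ := deriv (fun ρ' => Phi b u r t v ρ') ρ
/-- ∂²_{uv} Φ -/
noncomputable def Puv (b u r t v ρ : ℝ) : ℝ := deriv (fun u' => Pv b u' r t v ρ) u
/-- ∂²_{uρ} Φ -/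
noncomputable def Pup (b u r t v ρ : ℝ) : ℝ := deriv (fun u' => Pp b u' r t v ρ) u
/-- ∂²_{rv} Φ -/
noncomputable def Prv (b u r t v ρ : ℝ) : ℝ := deriv (fun r' => Pv b u r' t v ρ) r
/-- ∂²_{rρ} Φ -/
noncomputable def Prp (b u r t v ρ : ℝ) : ℝ := deriv (fun r' => Pp b u r' t v ρ) r
/-- ∂²_{tv} Φ -/
noncomputable def Ptv (b u r t v ρ : ℝ) : ℝ := deriv (fun t' => Pv b u r t' v ρ) t
/-- ∂²_{tρ} Φ -/
noncomputable def Ptp (b u r t v ρ : ℝ) : ℝ := deriv (fun t' => Pp b u r t' v ρ) t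
/-- ∂²_{vv} Φ -/
noncomputable def Pvv (b u r t v ρ : ℝ) : ℝ := deriv (fun v' => Pv b u r t v' ρ) v
/-- ∂²_{vρ} Φ -/
noncomputable def Pvp (b u r t v ρ : ℝ) : ℝ := deriv (fun v' => Pp b u r t v' ρ) v
/-- ∂²_{ρv} Φ -/
noncomputable def Ppv (b u r t v ρ : ℝ) : ℝ := deriv (fun ρ' => Pv b u r t v ρ') ρ
/-- ∂²_{ρρ} Φ -/
noncomputable def Ppp (b u r t v ρ : ℝ) : ℝ := deriv (fun ρ' => Pp b u r t v ρ') ρ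

lemma pu_eq (b u r t v ρ : ℝ) : Pu b u r t v ρ = 2 * (u - v) := by
  unfold Pu Phi
  have h := (((hasDerivAt_id u).sub_const v).fun_pow 2).sub_const
    ((b / 2) ^ 2 * (4 * r ^ 2 * ρ ^ 2 - (r ^ 2 + ρ ^ 2 - t ^ 2) ^ 2))
  simp only [id_eq] at h
  rw [h.deriv]; ring

lemma pv_eq (b u r t v ρ : ℝ) : Pv b u r t v ρ = -(2 * (u - v)) := by
  unfold Pv Phi
  have h := (((hasDerivAt_id v).const_sub u).fun_pow 2).sub_const
    ((b / 2) ^ 2 * (4 * r ^ 2 * ρ ^ 2 - (r ^ 2 + ρ ^ 2 - t ^ 2) ^ 2))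
  simp only [id_eq] at h
  rw [h.deriv]; ring

lemma pp_eq (b u r t v ρ : ℝ) :
    Pp b u r t v ρ = -(b ^ 2) * ρ * (t ^ 2 + r ^ 2 - ρ ^ 2) := by
  unfold Pp Phi
  have hsq : HasDerivAt (fun ρ' : ℝ => ρ' ^ 2) (2 * ρ) ρ := by
    simpa using (hasDerivAt_id ρ).fun_pow 2
  have h := ((((hsq.const_mul (4 * r ^ 2)).sub
      (((hsq.const_add (r ^ 2)).sub_const (t ^ 2)).fun_pow 2)).const_mul
      ((b / 2) ^ 2)).const_sub ((u - v) ^ 2))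
  simp only [id_eq, Pi.sub_apply] at h
  rw [h.deriv]; ring

lemma pr_eq (b u r t v ρ : ℝ) :
    Pr b u r t v ρ = -(b ^ 2) * r * (t ^ 2 - r ^ 2 + ρ ^ 2) := by
  unfold Pr Phi
  have hsq : HasDerivAt (fun r' : ℝ => r' ^ 2) (2 * r) r := by
    simpa using (hasDerivAt_id r).fun_pow 2
  have h := (((((hsq.const_mul 4).mul_const (ρ ^ 2)).sub
      (((hsq.add_const (ρ ^ 2)).sub_const (t ^ 2)).fun_pow 2)).const_mul
      ((b / 2) ^ 2)).const_sub ((u - v) ^ 2))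
  simp only [id_eq, Pi.sub_apply] at h
  rw [h.deriv]; ring

lemma puv_eq (b u r t v ρ : ℝ) : Puv b u r t v ρ = -2 := by
  unfold Puv
  simp only [pv_eq]
  have h : HasDerivAt (fun u' : ℝ => -(2 * (u' - v))) (-2) u := by
    have := (((hasDerivAt_id u).sub_const v).const_mul 2).fun_neg
    simpa using this
  rw [h.deriv]

lemma pup_eq (b u r t v ρ : ℝ) : Pup b u r t v ρ = 0 := by
  unfold Pup
  simp only [pp_eq]
  exact deriv_const u _

lemma prv_eq (b u r t v ρ : ℝ) : Prv b u r t v ρ = 0 := by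
  unfold Prv
  simp only [pv_eq]
  exact deriv_const r _

lemma prp_eq (b u r t v ρ : ℝ) : Prp b u r t v ρ = -(2 * b ^ 2 * r * ρ) := by
  unfold Prp
  simp only [pp_eq]
  have hsq : HasDerivAt (fun r' : ℝ => r' ^ 2) (2 * r) r := by
    simpa using (hasDerivAt_id r).fun_pow 2
  have h : HasDerivAt (fun r' : ℝ => -(b ^ 2) * ρ * (t ^ 2 + r' ^ 2 - ρ ^ 2))
      (-(b ^ 2) * ρ * (2 * r)) r :=
    ((hsq.const_add (t ^ 2)).sub_const (ρ ^ 2)).const_mul (-(b ^ 2) * ρ)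
  rw [h.deriv]; ring

/-- On the zero set of Φ_t, the determinant of the Monge–Ampère matrix
(the rotational curvature Rot(Φ_t)) equals 4b⁴rt²ρ(t²−r²−ρ²). -/
theorem statement5 (b u r t v ρ : ℝ) (hΦ : Phi b u r t v ρ = 0) :
    Matrix.det !![Phi b u r t v ρ, Pv b u r t v ρ, Pp b u r t v ρ;
                  Pu b u r t v ρ, Puv b u r t v ρ, Pup b u r t v ρ;
                  Pr b u r t v ρ, Prv b u r t v ρ, Prp b u r t v ρ]
      = 4 * b ^ 4 * r * t ^ 2 * ρ * (t ^ 2 - r ^ 2 - ρ ^ 2) := by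
  rw [Matrix.det_fin_three, hΦ, pu_eq, pv_eq, pp_eq, pr_eq, puv_eq, pup_eq, prv_eq, prp_eq]
  norm_num [Matrix.cons_val_zero, Matrix.cons_val_one, Matrix.head_cons, Matrix.cons_val_two,
    Matrix.tail_cons, Matrix.head_fin_const]
  unfold Phi at hΦ
  linear_combination (-8 * b ^ 2 * r * ρ) * hΦ
end

section
/- Let κ(Φ_t)(u,r,t;v,ρ) denote the determinant of the 3×3 bordered Hessian with first row (Φ_t, ∂_vΦ_t, ∂_ρΦ_t), second row (∂_vΦ_t, ∂²_{vv}Φ_t, ∂²_{vρ}Φ_t), third row (∂_ρΦ_t, ∂²_{ρv}Φ_t, ∂²_{ρρ}Φ_t). Then whenever Φ(u,r,t;v,ρ) = 0, κ(Φ_t) = b⁴(ρ⁶ − 3(r²+t²)ρ⁴ + 3(r²−t²)²ρ² − (r²−t²)²(r²+t²)). -/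
lemma hdv (b u r t v ρ : ℝ) : HasDerivAt (fun v' => Phi b u r t v' ρ) (-(2*(u-v))) v := by
  unfold Phi
  have h := (((hasDerivAt_id v).const_sub u).pow 2).sub_const
    ((b / 2) ^ 2 * (4 * r ^ 2 * ρ ^ 2 - (r ^ 2 + ρ ^ 2 - t ^ 2) ^ 2))
  simp only [id_eq] at h
  exact h.congr_deriv (by norm_num <;> ring)

lemma hdp (b u r t v ρ : ℝ) :
    HasDerivAt (fun ρ' => Phi b u r t v ρ') (-(b/2)^2*(8*r^2*ρ - 2*(r^2+ρ^2-t^2)*(2*ρ))) ρ := by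
  unfold Phi
  have h1 : HasDerivAt (fun ρ' : ℝ => 4 * r ^ 2 * ρ' ^ 2) (4*r^2*(2*ρ)) ρ := by
    simpa using ((hasDerivAt_pow 2 ρ).const_mul (4*r^2))
  have h2 : HasDerivAt (fun ρ' : ℝ => (r ^ 2 + ρ' ^ 2 - t ^ 2) ^ 2) (2*(r^2+ρ^2-t^2)*(2*ρ)) ρ := by
    have := (((hasDerivAt_pow 2 ρ).const_add (r^2)).sub_const (t^2)).pow 2
    exact this.congr_deriv (by norm_num <;> ring)
  have h := ((h1.sub h2).const_mul ((b/2)^2)).const_sub ((u-v)^2)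
  exact h.congr_deriv (by ring)

lemma Pv_eq (b u r t v ρ : ℝ) : Pv b u r t v ρ = -(2*(u-v)) := (hdv b u r t v ρ).deriv

lemma Pp_eq (b u r t v ρ : ℝ) :
    Pp b u r t v ρ = -(b/2)^2*(8*r^2*ρ - 2*(r^2+ρ^2-t^2)*(2*ρ)) := (hdp b u r t v ρ).deriv

lemma Pvv_eq (b u r t v ρ : ℝ) : Pvv b u r t v ρ = 2 := by
  unfold Pvv
  have hf : (fun v' => Pv b u r t v' ρ) = fun v' => -(2*(u-v')) := by
    funext v'; exact Pv_eq b u r t v' ρ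
  rw [hf]
  have h : HasDerivAt (fun v' : ℝ => -(2*(u-v'))) 2 v := by
    have := (((hasDerivAt_id v).const_sub u).const_mul 2).neg
    simp only [id_eq] at this
    exact this.congr_deriv (by norm_num <;> ring)
  exact h.deriv

lemma Pvp_eq (b u r t v ρ : ℝ) : Pvp b u r t v ρ = 0 := by
  unfold Pvp
  have hf : (fun v' => Pp b u r t v' ρ)
      = fun _ : ℝ => -(b/2)^2*(8*r^2*ρ - 2*(r^2+ρ^2-t^2)*(2*ρ)) := by
    funext v'; exact Pp_eq b u r t v' ρ
  rw [hf, deriv_const]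

lemma Ppv_eq (b u r t v ρ : ℝ) : Ppv b u r t v ρ = 0 := by
  unfold Ppv
  have hf : (fun ρ' => Pv b u r t v ρ') = fun _ : ℝ => -(2*(u-v)) := by
    funext ρ'; exact Pv_eq b u r t v ρ'
  rw [hf, deriv_const]

lemma Ppp_eq (b u r t v ρ : ℝ) : Ppp b u r t v ρ = -b^2*(t^2+r^2-3*ρ^2) := by
  unfold Ppp
  have hf : (fun ρ' => Pp b u r t v ρ')
      = fun ρ' : ℝ => -b^2*((r^2+t^2)*ρ' - ρ'^3) := by
    funext ρ'; rw [Pp_eq]; ring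
  rw [hf]
  have h : HasDerivAt (fun ρ' : ℝ => -b^2*((r^2+t^2)*ρ' - ρ'^3))
      (-b^2*((r^2+t^2)*1 - 3*ρ^2)) ρ := by
    have h1 : HasDerivAt (fun ρ' : ℝ => (r^2+t^2)*ρ') ((r^2+t^2)*1) ρ := by
      simpa using (hasDerivAt_id ρ).const_mul (r^2+t^2)
    have h2 : HasDerivAt (fun ρ' : ℝ => ρ'^3) (3*ρ^2) ρ := by
      simpa using hasDerivAt_pow 3 ρ
    exact (h1.sub h2).const_mul (-b^2)
  rw [h.deriv]; ring

/-- On the zero set of Φ, the bordered-Hessian curvature determinant κ(Φ_t)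
equals b⁴(ρ⁶ − 3(r²+t²)ρ⁴ + 3(r²−t²)²ρ² − (r²−t²)²(r²+t²)). -/
theorem statement8 (b u r t v ρ : ℝ) (hΦ : Phi b u r t v ρ = 0) :
    Matrix.det !![Phi b u r t v ρ, Pv b u r t v ρ, Pp b u r t v ρ;
                  Pv b u r t v ρ, Pvv b u r t v ρ, Pvp b u r t v ρ;
                  Pp b u r t v ρ, Ppv b u r t v ρ, Ppp b u r t v ρ]
      = b ^ 4 * (ρ ^ 6 - 3 * (r ^ 2 + t ^ 2) * ρ ^ 4 + 3 * (r ^ 2 - t ^ 2) ^ 2 * ρ ^ 2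
          - (r ^ 2 - t ^ 2) ^ 2 * (r ^ 2 + t ^ 2)) := by
  simp only [Matrix.det_fin_three, Matrix.of_apply, Matrix.cons_val', Matrix.cons_val_zero,
    Matrix.cons_val_one, Matrix.head_cons, Matrix.empty_val', Matrix.cons_val_fin_one,
    Matrix.cons_val_two, Matrix.tail_cons, Matrix.head_fin_const]
  rw [Pv_eq, Pp_eq, Pvv_eq, Pvp_eq, Ppv_eq, Ppp_eq]
  have h : Phi b u r t v ρ = (u - v) ^ 2
      - (b / 2) ^ 2 * (4 * r ^ 2 * ρ ^ 2 - (r ^ 2 + ρ ^ 2 - t ^ 2) ^ 2) := rfl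
  rw [h] at hΦ ⊢
  linear_combination (2*b^2*(t^2+r^2-3*ρ^2)) * hΦ
end

section
/- Let ℘_{r,t}(s) := b⁴(s³ − 3(r²+t²)s² + 3(r²−t²)²s − (r²−t²)²(r²+t²)) for real parameters r, t and b ≠ 0. Then ℘_{r,t}((r−t)²) = −8b⁴r²t²(r−t)², and ℘_{r,t} is nonincreasing on the interval [(r−t)², (r+t)²]. Consequently, for all s in [(r−t)², (r+t)²], |℘_{r,t}(s)| ≥ 8b⁴r²t²(r−t)². -/
/-- Properties of the cubic ℘_{r,t}(s) = b⁴(s³ − 3(r²+t²)s² + 3(r²−t²)²s − (r²−t²)²(r²+t²)):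
value at (r−t)², monotonicity on [(r−t)², (r+t)²], and the resulting lower bound. -/
theorem statement9 (b r t : ℝ) (hb : b ≠ 0) (hr : 0 < r) (ht : 0 < t) :
    (fun s : ℝ => b ^ 4 * (s ^ 3 - 3 * (r ^ 2 + t ^ 2) * s ^ 2
        + 3 * (r ^ 2 - t ^ 2) ^ 2 * s - (r ^ 2 - t ^ 2) ^ 2 * (r ^ 2 + t ^ 2)))
        ((r - t) ^ 2)
      = -8 * b ^ 4 * r ^ 2 * t ^ 2 * (r - t) ^ 2 ∧
    AntitoneOn (fun s : ℝ => b ^ 4 * (s ^ 3 - 3 * (r ^ 2 + t ^ 2) * s ^ 2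
        + 3 * (r ^ 2 - t ^ 2) ^ 2 * s - (r ^ 2 - t ^ 2) ^ 2 * (r ^ 2 + t ^ 2)))
      (Set.Icc ((r - t) ^ 2) ((r + t) ^ 2)) ∧
    ∀ s ∈ Set.Icc ((r - t) ^ 2) ((r + t) ^ 2),
      8 * b ^ 4 * r ^ 2 * t ^ 2 * (r - t) ^ 2 ≤
        |b ^ 4 * (s ^ 3 - 3 * (r ^ 2 + t ^ 2) * s ^ 2
          + 3 * (r ^ 2 - t ^ 2) ^ 2 * s - (r ^ 2 - t ^ 2) ^ 2 * (r ^ 2 + t ^ 2))| := by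
  set f : ℝ → ℝ := fun s => b ^ 4 * (s ^ 3 - 3 * (r ^ 2 + t ^ 2) * s ^ 2
      + 3 * (r ^ 2 - t ^ 2) ^ 2 * s - (r ^ 2 - t ^ 2) ^ 2 * (r ^ 2 + t ^ 2)) with hf
  have hb4 : 0 < b ^ 4 := by positivity
  have hval : f ((r - t) ^ 2) = -8 * b ^ 4 * r ^ 2 * t ^ 2 * (r - t) ^ 2 := by
    simp only [hf]; ring
  have hanti : AntitoneOn f (Set.Icc ((r - t) ^ 2) ((r + t) ^ 2)) := by
    have hderiv : ∀ x : ℝ, HasDerivAt f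
        (b ^ 4 * (3 * x ^ 2 - 6 * (r ^ 2 + t ^ 2) * x + 3 * (r ^ 2 - t ^ 2) ^ 2)) x := by
      intro x
      have h1 : HasDerivAt (fun s : ℝ => s ^ 3) (3 * x ^ 2) x := by
        simpa using hasDerivAt_pow 3 x
      have h2 : HasDerivAt (fun s : ℝ => s ^ 2) (2 * x) x := by
        simpa using hasDerivAt_pow 2 x
      have h3 : HasDerivAt (fun s : ℝ => s) 1 x := hasDerivAt_id' x
      have h := ((((h1.sub (h2.const_mul (3 * (r ^ 2 + t ^ 2)))).add
        (h3.const_mul (3 * (r ^ 2 - t ^ 2) ^ 2))).sub_const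
        ((r ^ 2 - t ^ 2) ^ 2 * (r ^ 2 + t ^ 2))).const_mul (b ^ 4))
      convert h using 1
      · rfl
      · rfl
      · funext y; simp only [hf, Pi.add_apply, Pi.sub_apply]
      ring
    apply antitoneOn_of_deriv_nonpos (convex_Icc _ _)
    · exact (Continuous.continuousOn (by fun_prop))
    · intro x hx
      exact (hderiv x).differentiableAt.differentiableWithinAt
    · intro x hx
      rw [(hderiv x).deriv]
      rw [interior_Icc] at hx
      have h1 : (r - t) ^ 2 < x := hx.1
      have h2 : x < (r + t) ^ 2 := hx.2
      have key : 3 * x ^ 2 - 6 * (r ^ 2 + t ^ 2) * x + 3 * (r ^ 2 - t ^ 2) ^ 2 ≤ 0 := by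
        nlinarith [sq_nonneg (x - (r ^ 2 + t ^ 2)), mul_pos hr ht,
          sq_nonneg (r - t), sq_nonneg (r + t)]
      nlinarith [hb4]
  refine ⟨hval, hanti, ?_⟩
  intro s hs
  have hmem : (r - t) ^ 2 ∈ Set.Icc ((r - t) ^ 2) ((r + t) ^ 2) := by
    exact ⟨le_refl _, by nlinarith [mul_pos hr ht]⟩
  have hle : f s ≤ f ((r - t) ^ 2) := hanti hmem hs hs.1
  rw [hval] at hle
  have hpos : (0:ℝ) ≤ 8 * b ^ 4 * r ^ 2 * t ^ 2 * (r - t) ^ 2 := by positivity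
  have hneg : f s ≤ 0 := by linarith
  show 8 * b ^ 4 * r ^ 2 * t ^ 2 * (r - t) ^ 2 ≤ |f s|
  rw [abs_of_nonpos hneg]
  linarith
end

section
/- Let 1 ≤ p < ∞, I ⊂ ℝ a compact interval, and F : ℝ^d × I → ℝ measurable, with F(x,·) ∈ C¹(I) for a.e. x, and F, ∂_t F ∈ L^p(ℝ^d × I). Then for every t₀ ∈ I: ∫_{ℝ^d} sup_{t ∈ I}|F(x,t)|^p dx ≤ ∫_{ℝ^d}|F(x,t₀)|^p dx + p·‖F‖_{L^p(ℝ^d×I)}^{p−1}·‖∂_t F‖_{L^p(ℝ^d×I)}. -/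
open MeasureTheory Set Filter Topology


lemma s14_sq_rpow (x r : ℝ) : (x ^ 2 : ℝ) ^ (r / 2) = |x| ^ r := by
  rw [← sq_abs x, ← Real.rpow_natCast |x| 2, ← Real.rpow_mul (abs_nonneg x)]
  norm_num
  congr 1
  ring

lemma s14_memLp {α : Type*} [MeasurableSpace α] {μ : Measure α} {f : α → ℝ} {r : ℝ}
    (hr : 0 < r) (hm : AEStronglyMeasurable f μ)
    (hi : Integrable (fun x => |f x| ^ r) μ) : MemLp f (ENNReal.ofReal r) μ := by
  have h0 : (ENNReal.ofReal r) ≠ 0 := by simp [ENNReal.ofReal_eq_zero, not_le, hr]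
  have ht : (ENNReal.ofReal r) ≠ ⊤ := ENNReal.ofReal_ne_top
  refine (memLp_norm_rpow_iff (q := ENNReal.ofReal r) (p := ENNReal.ofReal r) hm h0 ht).1 ?_
  rw [ENNReal.div_self h0 ht, memLp_one_iff_integrable]
  refine hi.congr (Eventually.of_forall fun x => ?_)
  show |f x| ^ r = ‖f x‖ ^ (ENNReal.ofReal r).toReal
  rw [ENNReal.toReal_ofReal hr.le, Real.norm_eq_abs]

lemma s14_holder {α : Type*} [MeasurableSpace α] {μ : Measure α} {p : ℝ} (hp : 1 ≤ p)
    {u v : α → ℝ} (hu0 : ∀ x, 0 ≤ u x) (hv0 : ∀ x, 0 ≤ v x)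
    (hum : AEStronglyMeasurable u μ) (hvm : AEStronglyMeasurable v μ)
    (hui : Integrable (fun x => u x ^ p) μ) (hvi : Integrable (fun x => v x ^ p) μ) :
    ∫ x, u x ^ (p - 1) * v x ∂μ
      ≤ (∫ x, u x ^ p ∂μ) ^ ((p - 1) / p) * (∫ x, v x ^ p ∂μ) ^ (1 / p) := by
  rcases eq_or_lt_of_le hp with h1 | h1
  · subst h1
    simp [Real.rpow_zero, Real.rpow_one]
  · have hp0 : (0 : ℝ) < p := zero_lt_one.trans h1
    have hp1 : p - 1 ≠ 0 := sub_ne_zero.2 (ne_of_gt h1)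
    have hpq : (p / (p - 1)).HolderConjugate p := (Real.HolderConjugate.conjExponent h1).symm
    have hq0 : 0 < p / (p - 1) := div_pos hp0 (sub_pos.2 h1)
    have harith : (p - 1) * (p / (p - 1)) = p := by field_simp
    have hmemf : MemLp (fun x => u x ^ (p - 1)) (ENNReal.ofReal (p / (p - 1))) μ := by
      refine s14_memLp hq0
        ((Real.continuous_rpow_const (by linarith)).comp_aestronglyMeasurable hum) ?_
      refine hui.congr (Eventually.of_forall fun x => ?_)
      show u x ^ p = |u x ^ (p - 1)| ^ (p / (p - 1))
      rw [abs_of_nonneg (Real.rpow_nonneg (hu0 x) _), ← Real.rpow_mul (hu0 x), harith]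
    have hmemg : MemLp v (ENNReal.ofReal p) μ := by
      refine s14_memLp hp0 hvm ?_
      refine hvi.congr (Eventually.of_forall fun x => ?_)
      show v x ^ p = |v x| ^ p
      rw [abs_of_nonneg (hv0 x)]
    have key := integral_mul_le_Lp_mul_Lq_of_nonneg hpq
      (Eventually.of_forall fun x => Real.rpow_nonneg (hu0 x) _)
      (Eventually.of_forall fun x => hv0 x) hmemf hmemg
    have e1 : ∀ x, (u x ^ (p - 1)) ^ (p / (p - 1)) = u x ^ p := fun x => by
      rw [← Real.rpow_mul (hu0 x), harith]
    have e2 : (1 : ℝ) / (p / (p - 1)) = (p - 1) / p := one_div_div _ _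
    rw [e2] at key
    simpa only [e1] using key

lemma s14_ftc {a b : ℝ} {h h' : ℝ → ℝ}
    (hder : ∀ t ∈ Set.Icc a b, HasDerivWithinAt h (h' t) (Set.Icc a b) t)
    (hcont : ContinuousOn h' (Set.Icc a b)) {c d : ℝ}
    (hc : c ∈ Set.Icc a b) (hd : d ∈ Set.Icc a b) :
    h d - h c ≤ ∫ t in Set.Icc a b, |h' t| := by
  have hconth : ContinuousOn h (Set.Icc a b) := fun t ht => (hder t ht).continuousWithinAt
  have claim : ∀ c d : ℝ, c ∈ Set.Icc a b → d ∈ Set.Icc a b → c ≤ d →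
      |h d - h c| ≤ ∫ t in Set.Icc a b, |h' t| := by
    intro c d hc hd hcd
    have hIcc : Set.Icc c d ⊆ Set.Icc a b := Set.Icc_subset_Icc hc.1 hd.2
    have hIoo : Set.Ioo c d ⊆ Set.Ioo a b := Set.Ioo_subset_Ioo hc.1 hd.2
    have key : ∫ t in c..d, h' t = h d - h c := by
      refine intervalIntegral.integral_eq_sub_of_hasDeriv_right_of_le hcd (hconth.mono hIcc)
        (fun t ht => ?_) ((hcont.mono hIcc).intervalIntegrable_of_Icc hcd)
      have htab : t ∈ Set.Ioo a b := hIoo ht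
      exact ((hder t (Set.Ioo_subset_Icc_self htab)).hasDerivAt
        (Icc_mem_nhds htab.1 htab.2)).hasDerivWithinAt
    calc |h d - h c| = |∫ t in c..d, h' t| := by rw [key]
      _ ≤ ∫ t in c..d, |h' t| := intervalIntegral.abs_integral_le_integral_abs hcd
      _ = ∫ t in Set.Ioc c d, |h' t| := intervalIntegral.integral_of_le hcd
      _ ≤ ∫ t in Set.Icc a b, |h' t| := by
          refine setIntegral_mono_set (hcont.abs.integrableOn_Icc)
            (Eventually.of_forall fun t => abs_nonneg _) ?_
          exact ((Set.Ioc_subset_Icc_self.trans hIcc)).eventuallyLE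
  rcases le_total c d with hcd | hdc
  · exact (le_abs_self _).trans (claim c d hc hd hcd)
  · calc h d - h c ≤ |h d - h c| := le_abs_self _
      _ = |h c - h d| := abs_sub_comm _ _
      _ ≤ ∫ t in Set.Icc a b, |h' t| := claim d c hd hc hdc

lemma s14_oneDim {p : ℝ} (hp : 1 ≤ p) {a b : ℝ} {g g' : ℝ → ℝ}
    (hg : ∀ t ∈ Set.Icc a b, HasDerivWithinAt g (g' t) (Set.Icc a b) t)
    (hg' : ContinuousOn g' (Set.Icc a b)) {t₀ s : ℝ}
    (ht₀ : t₀ ∈ Set.Icc a b) (hs : s ∈ Set.Icc a b) :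
    |g s| ^ p ≤ |g t₀| ^ p + p * ∫ t in Set.Icc a b, |g t| ^ (p - 1) * |g' t| := by
  have hp0 : (0 : ℝ) < p := zero_lt_one.trans_le hp
  have hgc : ContinuousOn g (Set.Icc a b) := fun t ht => (hg t ht).continuousWithinAt
  -- step 1: epsilon-regularized inequality
  have eps : ∀ ε : ℝ, 0 < ε →
      ((g s) ^ 2 + ε) ^ (p / 2) ≤ ((g t₀) ^ 2 + ε) ^ (p / 2)
        + p * ∫ t in Set.Icc a b, ((g t) ^ 2 + ε) ^ ((p - 1) / 2) * |g' t| := by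
    intro ε hε
    set X : ℝ → ℝ := fun t => (g t) ^ 2 + ε with hXdef
    have hXpos : ∀ t, 0 < X t := fun t => by positivity
    set h : ℝ → ℝ := fun t => X t ^ (p / 2) with hhdef
    set h' : ℝ → ℝ := fun t => (p / 2 * X t ^ (p / 2 - 1)) * (2 * g t ^ 1 * g' t) with hh'def
    have hXcont : ContinuousOn X (Set.Icc a b) := (hgc.pow 2).add continuousOn_const
    have hder : ∀ t ∈ Set.Icc a b, HasDerivWithinAt h (h' t) (Set.Icc a b) t := by
      intro t ht
      have h1 : HasDerivWithinAt (fun t => (g t) ^ 2 + ε)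
          (((2 : ℕ) : ℝ) * g t ^ (2 - 1) * g' t) (Set.Icc a b) t := ((hg t ht).pow 2).add_const ε
      have h2 : HasDerivAt (fun y : ℝ => y ^ (p / 2)) (p / 2 * X t ^ (p / 2 - 1)) (X t) :=
        Real.hasDerivAt_rpow_const (Or.inl (hXpos t).ne')
      have h3 := h2.comp_hasDerivWithinAt t h1
      exact h3.congr_deriv (by norm_num [h'])
    have hcont' : ContinuousOn h' (Set.Icc a b) := by
      refine ContinuousOn.mul (ContinuousOn.mul continuousOn_const
        (hXcont.rpow_const fun t ht => Or.inl (hXpos t).ne')) ?_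
      exact (continuousOn_const.mul (hgc.pow 1)).mul hg'
    have hftc := s14_ftc hder hcont' ht₀ hs
    have hpt : ∀ t ∈ Set.Icc a b, |h' t| ≤ p * (X t ^ ((p - 1) / 2) * |g' t|) := by
      intro t ht
      have habs : |g t| ≤ X t ^ ((1 : ℝ) / 2) := by
        have h4 : ((g t) ^ 2 : ℝ) ^ ((1 : ℝ) / 2) ≤ X t ^ ((1 : ℝ) / 2) :=
          Real.rpow_le_rpow (sq_nonneg _) (le_add_of_nonneg_right hε.le) (by norm_num)
        rwa [s14_sq_rpow (g t) 1, Real.rpow_one] at h4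
      have hXe : X t ^ (p / 2 - 1) * X t ^ ((1 : ℝ) / 2) = X t ^ ((p - 1) / 2) := by
        rw [← Real.rpow_add (hXpos t)]
        congr 1
        ring
      calc |h' t| = (p / 2 * X t ^ (p / 2 - 1)) * (2 * |g t| * |g' t|) := by
            rw [hh'def]
            simp only [pow_one, abs_mul]
            rw [abs_of_nonneg (by positivity : (0:ℝ) ≤ p / 2),
              abs_of_nonneg (Real.rpow_nonneg (hXpos t).le _), abs_two]
        _ ≤ (p / 2 * X t ^ (p / 2 - 1)) * (2 * X t ^ ((1 : ℝ) / 2) * |g' t|) := by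
            have hf : (0:ℝ) ≤ p / 2 * X t ^ (p / 2 - 1) := by positivity
            refine mul_le_mul_of_nonneg_left ?_ hf
            refine mul_le_mul_of_nonneg_right ?_ (abs_nonneg _)
            exact mul_le_mul_of_nonneg_left habs (by norm_num)
        _ = p * (X t ^ (p / 2 - 1) * X t ^ ((1 : ℝ) / 2) * |g' t|) := by ring
        _ = p * (X t ^ ((p - 1) / 2) * |g' t|) := by rw [hXe]
    have hint1 : IntegrableOn (fun t => |h' t|) (Set.Icc a b) := hcont'.abs.integrableOn_Icc
    have hint2 : IntegrableOn (fun t => p * (X t ^ ((p - 1) / 2) * |g' t|)) (Set.Icc a b) := by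
      refine ContinuousOn.integrableOn_Icc ?_
      exact continuousOn_const.mul (ContinuousOn.mul
        (hXcont.rpow_const fun t ht => Or.inl (hXpos t).ne') hg'.abs)
    have hmono : (∫ t in Set.Icc a b, |h' t|)
        ≤ ∫ t in Set.Icc a b, p * (X t ^ ((p - 1) / 2) * |g' t|) :=
      setIntegral_mono_on hint1 hint2 measurableSet_Icc hpt
    have hconst : (∫ t in Set.Icc a b, p * (X t ^ ((p - 1) / 2) * |g' t|))
        = p * ∫ t in Set.Icc a b, X t ^ ((p - 1) / 2) * |g' t| := by
      rw [integral_const_mul]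
    have := hftc.trans (hmono.trans_eq hconst)
    have hhs : h s = ((g s) ^ 2 + ε) ^ (p / 2) := rfl
    have hht : h t₀ = ((g t₀) ^ 2 + ε) ^ (p / 2) := rfl
    rw [hhs, hht] at this
    linarith
  -- step 2: limits as ε → 0+
  have l := nhdsWithin_le_nhds (a := (0:ℝ)) (s := Set.Ioi (0:ℝ))
  have lim_pt : ∀ y : ℝ, ∀ r : ℝ, 0 ≤ r → Tendsto (fun ε : ℝ => (y ^ 2 + ε) ^ (r / 2))
      (nhdsWithin 0 (Set.Ioi 0)) (nhds (|y| ^ r)) := by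
    intro y r hr
    have hc : ContinuousAt (fun ε : ℝ => (y ^ 2 + ε) ^ (r / 2)) 0 := by
      refine ContinuousAt.rpow_const ?_ (Or.inr (div_nonneg hr (by norm_num)))
      exact (continuous_const.add continuous_id).continuousAt
    have h0 : (y ^ 2 + (0:ℝ)) ^ (r / 2) = |y| ^ r := by rw [add_zero, s14_sq_rpow]
    have := hc.tendsto
    rw [h0] at this
    exact this.mono_left nhdsWithin_le_nhds
  have lim3 : Tendsto (fun ε : ℝ => ∫ t in Set.Icc a b, ((g t) ^ 2 + ε) ^ ((p - 1) / 2) * |g' t|)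
      (nhdsWithin 0 (Set.Ioi 0))
      (nhds (∫ t in Set.Icc a b, |g t| ^ (p - 1) * |g' t|)) := by
    refine tendsto_integral_filter_of_dominated_convergence
      (fun t => ((g t) ^ 2 + 1) ^ ((p - 1) / 2) * |g' t|) ?_ ?_ ?_ ?_
    · refine Eventually.of_forall fun ε => ?_
      refine ContinuousOn.aestronglyMeasurable ?_ measurableSet_Icc
      exact (((hgc.pow 2).add continuousOn_const).rpow_const
        (fun t ht => Or.inr (by linarith : (0:ℝ) ≤ (p - 1) / 2))).mul hg'.abs
    · have hev : Set.Ioc (0:ℝ) 1 ∈ nhdsWithin (0:ℝ) (Set.Ioi 0) :=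
        Ioc_mem_nhdsGT_of_mem ⟨le_refl _, zero_lt_one⟩
      refine eventually_of_mem hev fun ε hε => ?_
      refine (ae_restrict_iff' measurableSet_Icc).2 (Eventually.of_forall fun t ht => ?_)
      have h1 : (0:ℝ) ≤ ((g t) ^ 2 + ε) ^ ((p - 1) / 2) * |g' t| :=
        mul_nonneg (Real.rpow_nonneg (add_nonneg (sq_nonneg _) hε.1.le) _) (abs_nonneg _)
      rw [Real.norm_eq_abs, abs_of_nonneg h1]
      refine mul_le_mul_of_nonneg_right ?_ (abs_nonneg _)
      exact Real.rpow_le_rpow (add_nonneg (sq_nonneg _) hε.1.le) (by linarith [hε.2]) (by linarith : (0:ℝ) ≤ (p - 1) / 2)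
    · refine ContinuousOn.integrableOn_Icc ?_
      exact (((hgc.pow 2).add continuousOn_const).rpow_const
        (fun t ht => Or.inr (by linarith : (0:ℝ) ≤ (p - 1) / 2))).mul hg'.abs
    · refine Eventually.of_forall fun t => ?_
      exact (lim_pt (g t) (p - 1) (by linarith)).mul_const _
  have lims : Tendsto (fun ε : ℝ => ((g s) ^ 2 + ε) ^ (p / 2)) (nhdsWithin 0 (Set.Ioi 0))
      (nhds (|g s| ^ p)) := lim_pt (g s) p hp0.le
  have limrhs : Tendsto (fun ε : ℝ => ((g t₀) ^ 2 + ε) ^ (p / 2)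
      + p * ∫ t in Set.Icc a b, ((g t) ^ 2 + ε) ^ ((p - 1) / 2) * |g' t|)
      (nhdsWithin 0 (Set.Ioi 0))
      (nhds (|g t₀| ^ p + p * ∫ t in Set.Icc a b, |g t| ^ (p - 1) * |g' t|)) :=
    (lim_pt (g t₀) p hp0.le).add (lim3.const_mul p)
  refine le_of_tendsto_of_tendsto lims limrhs ?_
  refine eventually_of_mem self_mem_nhdsWithin fun ε hε => eps ε hε

/-- Sobolev embedding lemma for maximal functions:
∫ sup_{t∈I}|F(x,t)|^p dx ≤ ∫|F(x,t₀)|^p dx + p‖F‖_{L^p(ℝ^d×I)}^{p−1}‖∂_tF‖_{L^p(ℝ^d×I)}. -/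
theorem statement14 (d : ℕ) (p : ℝ) (hp : 1 ≤ p) (a b t₀ : ℝ) (ht₀ : t₀ ∈ Set.Icc a b)
    (F F' : (Fin d → ℝ) → ℝ → ℝ)
    (hmeas : StronglyMeasurable (Function.uncurry F))
    (hC1 : ∀ᵐ x ∂(volume : Measure (Fin d → ℝ)),
      (∀ t ∈ Set.Icc a b, HasDerivWithinAt (F x) (F' x t) (Set.Icc a b) t) ∧
        ContinuousOn (F' x) (Set.Icc a b))
    (hF : MemLp (Function.uncurry F) (ENNReal.ofReal p)
      ((volume : Measure (Fin d → ℝ)).prod (volume.restrict (Set.Icc a b))))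
    (hF' : MemLp (Function.uncurry F') (ENNReal.ofReal p)
      ((volume : Measure (Fin d → ℝ)).prod (volume.restrict (Set.Icc a b)))) :
    ∫ x : Fin d → ℝ, (⨆ t ∈ Set.Icc a b, |F x t| ^ p)
      ≤ (∫ x : Fin d → ℝ, |F x t₀| ^ p) +
        p * ((∫ x : Fin d → ℝ, ∫ t in Set.Icc a b, |F x t| ^ p) ^ ((p - 1) / p)) *
          ((∫ x : Fin d → ℝ, ∫ t in Set.Icc a b, |F' x t| ^ p) ^ (1 / p)) := by
  have hp0 : (0 : ℝ) < p := zero_lt_one.trans_le hp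
  have hab : a ≤ b := ht₀.1.trans ht₀.2
  rcases eq_or_lt_of_le hab with hab' | hab'
  · -- degenerate case a = b
    subst hab'
    have ht0a : t₀ = a := le_antisymm ht₀.2 ht₀.1
    subst ht0a
    have hsup : ∀ x, (⨆ t ∈ Set.Icc t₀ t₀, |F x t| ^ p) = |F x t₀| ^ p := by
      intro x
      rw [Set.Icc_self]
      have hle : ∀ t : ℝ, (⨆ _ : t ∈ ({t₀} : Set ℝ), |F x t| ^ p) ≤ |F x t₀| ^ p := by
        intro t
        refine Real.iSup_le (fun ht => ?_) (Real.rpow_nonneg (abs_nonneg _) _)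
        rw [Set.mem_singleton_iff] at ht
        rw [ht]
      refine le_antisymm (Real.iSup_le hle (Real.rpow_nonneg (abs_nonneg _) _)) ?_
      have hbdd : BddAbove (Set.range fun t : ℝ => ⨆ _ : t ∈ ({t₀} : Set ℝ), |F x t| ^ p) := by
        refine ⟨|F x t₀| ^ p, ?_⟩
        rintro y ⟨t, rfl⟩
        exact hle t
      have h1 : (⨆ _ : t₀ ∈ ({t₀} : Set ℝ), |F x t₀| ^ p) = |F x t₀| ^ p := by
        have : (t₀ ∈ ({t₀} : Set ℝ)) := Set.mem_singleton _
        exact ciSup_const (ι := t₀ ∈ ({t₀} : Set ℝ)) (hι := ⟨this⟩)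
      calc |F x t₀| ^ p = _ := h1.symm
        _ ≤ ⨆ t : ℝ, ⨆ _ : t ∈ ({t₀} : Set ℝ), |F x t| ^ p := le_ciSup hbdd t₀
    have hzero : ∀ G : (Fin d → ℝ) → ℝ → ℝ,
        (∫ x : Fin d → ℝ, ∫ t in Set.Icc t₀ t₀, |G x t| ^ p) = 0 := by
      intro G
      have : (volume.restrict (Set.Icc t₀ t₀) : Measure ℝ) = 0 := by
        rw [Set.Icc_self]
        rw [Measure.restrict_eq_zero]
        exact measure_singleton _
      simp [this]
    rw [hzero F', Real.zero_rpow (by positivity : (1:ℝ)/p ≠ 0), mul_zero]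
    have : (∫ x : Fin d → ℝ, ⨆ t ∈ Set.Icc t₀ t₀, |F x t| ^ p)
        = ∫ x : Fin d → ℝ, |F x t₀| ^ p := by
      refine integral_congr_ae (Eventually.of_forall fun x => ?_)
      exact hsup x
    rw [this]
    simp
  · -- main case a < b
    set μt := (volume : Measure ℝ).restrict (Set.Icc a b) with hμt
    set A : (Fin d → ℝ) → ℝ := fun x => ∫ t in Set.Icc a b, |F x t| ^ p with hA
    set B : (Fin d → ℝ) → ℝ := fun x => ∫ t in Set.Icc a b, |F' x t| ^ p with hB
    have hA0 : ∀ x, 0 ≤ A x := fun x =>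
      integral_nonneg fun t => Real.rpow_nonneg (abs_nonneg _) _
    have hB0 : ∀ x, 0 ≤ B x := fun x =>
      integral_nonneg fun t => Real.rpow_nonneg (abs_nonneg _) _
    have hofr0 : (ENNReal.ofReal p) ≠ 0 := by simp [ENNReal.ofReal_eq_zero, not_le, hp0]
    have hofrt : (ENNReal.ofReal p) ≠ ⊤ := ENNReal.ofReal_ne_top
    -- integrability of |F|^p and |F'|^p on the product space
    have hFint : Integrable (fun z : (Fin d → ℝ) × ℝ => |Function.uncurry F z| ^ p)
        ((volume : Measure (Fin d → ℝ)).prod μt) := by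
      have := hF.integrable_norm_rpow hofr0 hofrt
      simpa [Real.norm_eq_abs, ENNReal.toReal_ofReal hp0.le] using this
    have hF'int : Integrable (fun z : (Fin d → ℝ) × ℝ => |Function.uncurry F' z| ^ p)
        ((volume : Measure (Fin d → ℝ)).prod μt) := by
      have := hF'.integrable_norm_rpow hofr0 hofrt
      simpa [Real.norm_eq_abs, ENNReal.toReal_ofReal hp0.le] using this
    have hAint : Integrable A (volume : Measure (Fin d → ℝ)) := by
      have := hFint.integral_prod_left
      simpa [Function.uncurry] using this
    have hBint : Integrable B (volume : Measure (Fin d → ℝ)) := by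
      have := hF'int.integral_prod_left
      simpa [Function.uncurry] using this
    -- pointwise (in x) bound via the 1-D lemma and Hoelder in t
    have hptwise : ∀ᵐ x ∂(volume : Measure (Fin d → ℝ)),
        (∀ s ∈ Set.Icc a b, |F x s| ^ p ≤ |F x t₀| ^ p
            + p * (A x ^ ((p - 1) / p) * B x ^ (1 / p)))
          ∧ (∀ s ∈ Set.Icc a b, |F x t₀| ^ p ≤ |F x s| ^ p
            + p * (A x ^ ((p - 1) / p) * B x ^ (1 / p))) := by
      filter_upwards [hC1] with x hx
      obtain ⟨hder, hcont⟩ := hx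
      have hgc : ContinuousOn (F x) (Set.Icc a b) :=
        fun t ht => (hder t ht).continuousWithinAt
      have hum : AEStronglyMeasurable (fun t => |F x t|) μt :=
        hgc.abs.aestronglyMeasurable measurableSet_Icc
      have hvm : AEStronglyMeasurable (fun t => |F' x t|) μt :=
        hcont.abs.aestronglyMeasurable measurableSet_Icc
      have hui : Integrable (fun t => |F x t| ^ p) μt :=
        (hgc.abs.rpow_const fun t ht => Or.inr hp0.le).integrableOn_Icc
      have hvi : Integrable (fun t => |F' x t| ^ p) μt :=
        (hcont.abs.rpow_const fun t ht => Or.inr hp0.le).integrableOn_Icc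
      have hK : (∫ t in Set.Icc a b, |F x t| ^ (p - 1) * |F' x t|)
          ≤ A x ^ ((p - 1) / p) * B x ^ (1 / p) :=
        s14_holder hp (fun t => abs_nonneg _) (fun t => abs_nonneg _) hum hvm hui hvi
      constructor
      · intro s hs
        have h1 := s14_oneDim hp hder hcont ht₀ hs
        have h2 : p * (∫ t in Set.Icc a b, |F x t| ^ (p - 1) * |F' x t|)
            ≤ p * (A x ^ ((p - 1) / p) * B x ^ (1 / p)) :=
          mul_le_mul_of_nonneg_left hK hp0.le
        linarith
      · intro s hs
        have h1 := s14_oneDim hp hder hcont hs ht₀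
        have h2 : p * (∫ t in Set.Icc a b, |F x t| ^ (p - 1) * |F' x t|)
            ≤ p * (A x ^ ((p - 1) / p) * B x ^ (1 / p)) :=
          mul_le_mul_of_nonneg_left hK hp0.le
        linarith
    -- integrability of the mixed term
    have hABm : AEStronglyMeasurable (fun x => A x ^ ((p - 1) / p) * B x ^ (1 / p))
        (volume : Measure (Fin d → ℝ)) := by
      have h1 : AEStronglyMeasurable (fun x => A x ^ ((p - 1) / p)) volume :=
        (Real.continuous_rpow_const (div_nonneg (by linarith) hp0.le)).comp_aestronglyMeasurable
          hAint.aestronglyMeasurable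
      have h2 : AEStronglyMeasurable (fun x => B x ^ (1 / p)) volume :=
        (Real.continuous_rpow_const (by positivity)).comp_aestronglyMeasurable
          hBint.aestronglyMeasurable
      exact h1.mul h2
    have hABle : ∀ x, A x ^ ((p - 1) / p) * B x ^ (1 / p)
        ≤ (p - 1) / p * A x + 1 / p * B x := by
      intro x
      refine Real.geom_mean_le_arith_mean2_weighted
        (div_nonneg (by linarith) hp0.le) (by positivity : (0:ℝ) ≤ 1 / p)
        (hA0 x) (hB0 x) ?_
      field_simp
      ring
    have hABint : Integrable (fun x => A x ^ ((p - 1) / p) * B x ^ (1 / p))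
        (volume : Measure (Fin d → ℝ)) := by
      refine Integrable.mono' ((hAint.const_mul ((p - 1) / p)).add (hBint.const_mul (1 / p)))
        hABm (Eventually.of_forall fun x => ?_)
      rw [Real.norm_eq_abs, abs_of_nonneg (mul_nonneg (Real.rpow_nonneg (hA0 x) _)
        (Real.rpow_nonneg (hB0 x) _))]
      exact hABle x
    -- integrability of x ↦ |F x t₀|^p
    have hFt0m : AEStronglyMeasurable (fun x => |F x t₀| ^ p)
        (volume : Measure (Fin d → ℝ)) := by
      have h1 : StronglyMeasurable (fun x : Fin d → ℝ => F x t₀) :=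
        hmeas.comp_measurable (measurable_id.prodMk measurable_const)
      exact ((Real.continuous_rpow_const hp0.le).comp continuous_abs).comp_stronglyMeasurable
        h1 |>.aestronglyMeasurable
    have hFt0int : Integrable (fun x => |F x t₀| ^ p) (volume : Measure (Fin d → ℝ)) := by
      refine Integrable.mono'
        ((hAint.const_mul (b - a)⁻¹).add (hABint.const_mul p)) hFt0m ?_
      filter_upwards [hptwise, hC1] with x hx hx1
      have hgc : ContinuousOn (F x) (Set.Icc a b) :=
        fun t ht => (hx1.1 t ht).continuousWithinAt
      have hcase : Integrable (fun t => |F x t| ^ p) μt :=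
        (hgc.abs.rpow_const fun t ht => Or.inr hp0.le).integrableOn_Icc
      rw [Real.norm_eq_abs, abs_of_nonneg (Real.rpow_nonneg (abs_nonneg _) _)]
      simp only [Pi.add_apply]
      -- average the reverse inequality over t
      have hx2 := hx.2
      have hmeasIcc : (volume (Set.Icc a b)).toReal = b - a := by
        rw [Real.volume_Icc, ENNReal.toReal_ofReal (by linarith)]
      have hint1 : IntegrableOn (fun _ : ℝ => |F x t₀| ^ p) (Set.Icc a b) :=
        integrableOn_const (by rw [Real.volume_Icc]; exact ENNReal.ofReal_ne_top)
      have hconst : (∫ _ in Set.Icc a b, |F x t₀| ^ p) = (b - a) * |F x t₀| ^ p := by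
        rw [setIntegral_const, smul_eq_mul, measureReal_def, hmeasIcc]
      have hint2 : IntegrableOn (fun t => |F x t| ^ p
          + p * (A x ^ ((p - 1) / p) * B x ^ (1 / p))) (Set.Icc a b) :=
        hcase.add (integrableOn_const
          (by rw [Real.volume_Icc]; exact ENNReal.ofReal_ne_top))
      have hmono := setIntegral_mono_on hint1 hint2 measurableSet_Icc
        (fun s hs => hx2 s hs)
      rw [hconst] at hmono
      have hsum : (∫ t in Set.Icc a b, (|F x t| ^ p
          + p * (A x ^ ((p - 1) / p) * B x ^ (1 / p))))
          = A x + (b - a) * (p * (A x ^ ((p - 1) / p) * B x ^ (1 / p))) := by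
        rw [integral_add hcase (integrableOn_const
          (by rw [Real.volume_Icc]; exact ENNReal.ofReal_ne_top))]
        rw [setIntegral_const, smul_eq_mul, measureReal_def, hmeasIcc, hA]
      rw [hsum] at hmono
      have hba : (0:ℝ) < b - a := by linarith
      have := (le_div_iff₀' hba).2 hmono
      calc |F x t₀| ^ p ≤ (A x + (b - a) * (p * (A x ^ ((p - 1) / p) * B x ^ (1 / p)))) / (b - a) := this
        _ = (b - a)⁻¹ * A x + p * (A x ^ ((p - 1) / p) * B x ^ (1 / p)) := by
            field_simp
    -- final chain
    have hS0 : ∀ x : Fin d → ℝ, 0 ≤ ⨆ t ∈ Set.Icc a b, |F x t| ^ p := fun x =>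
      Real.iSup_nonneg fun t => Real.iSup_nonneg fun _ => Real.rpow_nonneg (abs_nonneg _) _
    have hCint : Integrable (fun x => |F x t₀| ^ p
        + p * (A x ^ ((p - 1) / p) * B x ^ (1 / p))) (volume : Measure (Fin d → ℝ)) :=
      hFt0int.add (hABint.const_mul p)
    have hSle : ∀ᵐ x ∂(volume : Measure (Fin d → ℝ)),
        (⨆ t ∈ Set.Icc a b, |F x t| ^ p)
          ≤ |F x t₀| ^ p + p * (A x ^ ((p - 1) / p) * B x ^ (1 / p)) := by
      filter_upwards [hptwise] with x hx
      have hC0 : 0 ≤ |F x t₀| ^ p + p * (A x ^ ((p - 1) / p) * B x ^ (1 / p)) :=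
        add_nonneg (Real.rpow_nonneg (abs_nonneg _) _)
          (mul_nonneg hp0.le (mul_nonneg (Real.rpow_nonneg (hA0 x) _)
            (Real.rpow_nonneg (hB0 x) _)))
      exact Real.iSup_le (fun t => Real.iSup_le (fun ht => hx.1 t ht) hC0) hC0
    have step1 : (∫ x : Fin d → ℝ, ⨆ t ∈ Set.Icc a b, |F x t| ^ p)
        ≤ ∫ x : Fin d → ℝ, (|F x t₀| ^ p + p * (A x ^ ((p - 1) / p) * B x ^ (1 / p))) :=
      integral_mono_of_nonneg (Eventually.of_forall hS0) hCint hSle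
    have step2 : (∫ x : Fin d → ℝ, (|F x t₀| ^ p + p * (A x ^ ((p - 1) / p) * B x ^ (1 / p))))
        = (∫ x : Fin d → ℝ, |F x t₀| ^ p)
          + p * ∫ x : Fin d → ℝ, A x ^ ((p - 1) / p) * B x ^ (1 / p) := by
      rw [integral_add hFt0int (hABint.const_mul p), integral_const_mul]
    have e1 : ∀ x, (A x ^ ((1:ℝ) / p)) ^ p = A x := fun x => by
      rw [← Real.rpow_mul (hA0 x), one_div_mul_cancel hp0.ne', Real.rpow_one]
    have e1' : ∀ x, (B x ^ ((1:ℝ) / p)) ^ p = B x := fun x => by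
      rw [← Real.rpow_mul (hB0 x), one_div_mul_cancel hp0.ne', Real.rpow_one]
    have e2 : ∀ x, (A x ^ ((1:ℝ) / p)) ^ (p - 1) = A x ^ ((p - 1) / p) := fun x => by
      rw [← Real.rpow_mul (hA0 x)]
      congr 1
      ring
    have hxH := s14_holder (μ := (volume : Measure (Fin d → ℝ))) hp
      (u := fun x => A x ^ ((1:ℝ) / p)) (v := fun x => B x ^ ((1:ℝ) / p))
      (fun x => Real.rpow_nonneg (hA0 x) _) (fun x => Real.rpow_nonneg (hB0 x) _)
      ((Real.continuous_rpow_const (by positivity)).comp_aestronglyMeasurable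
        hAint.aestronglyMeasurable)
      ((Real.continuous_rpow_const (by positivity)).comp_aestronglyMeasurable
        hBint.aestronglyMeasurable)
      (hAint.congr (Eventually.of_forall fun x => (e1 x).symm))
      (hBint.congr (Eventually.of_forall fun x => (e1' x).symm))
    simp only [e1, e1', e2] at hxH
    have hfinal : (∫ x : Fin d → ℝ, |F x t₀| ^ p)
          + p * ∫ x : Fin d → ℝ, A x ^ ((p - 1) / p) * B x ^ (1 / p)
        ≤ (∫ x : Fin d → ℝ, |F x t₀| ^ p)
          + p * ((∫ x : Fin d → ℝ, A x) ^ ((p - 1) / p)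
            * (∫ x : Fin d → ℝ, B x) ^ (1 / p)) := by
      have := mul_le_mul_of_nonneg_left hxH hp0.le
      linarith
    calc (∫ x : Fin d → ℝ, ⨆ t ∈ Set.Icc a b, |F x t| ^ p) ≤ _ := step1
      _ = _ := step2
      _ ≤ (∫ x : Fin d → ℝ, |F x t₀| ^ p)
          + p * ((∫ x : Fin d → ℝ, A x) ^ ((p - 1) / p)
            * (∫ x : Fin d → ℝ, B x) ^ (1 / p)) := hfinal
      _ = _ := by ring
end

section
/- Let Φ(u,r,t;v,ρ) := (u−v)² − (b/2)²(4r²ρ² − (r²+ρ²−t²)²) and let Proj(Φ) := det [∂_{(u,r,t)}Φ, ∂²_{(u,r,t),v}Φ, ∂²_{(u,r,t),ρ}Φ] be the 3×3 determinant whose columns are the gradient of Φ in (u,r,t) and its v- and ρ-derivatives. Then for all points with Φ(u,r,t;v,ρ) = 0, Proj(Φ)(u,r,t;v,ρ) = −8b⁴·r·t·ρ·(r² − t²). -/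
/-- ∂_v applied to the (u,r,t)-gradient of Φ (for the projection determinant). -/
noncomputable def Pvu (b u r t v ρ : ℝ) : ℝ := deriv (fun v' => Pu b u r t v' ρ) v
noncomputable def Pvr (b u r t v ρ : ℝ) : ℝ := deriv (fun v' => Pr b u r t v' ρ) v
noncomputable def Pvt (b u r t v ρ : ℝ) : ℝ := deriv (fun v' => Pt b u r t v' ρ) v
/-- ∂_ρ applied to the (u,r,t)-gradient of Φ. -/
noncomputable def Ppu (b u r t v ρ : ℝ) : ℝ := deriv (fun ρ' => Pu b u r t v ρ') ρ
noncomputable def Ppr (b u r t v ρ : ℝ) : ℝ := deriv (fun ρ' => Pr b u r t v ρ') ρ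
noncomputable def Ppt (b u r t v ρ : ℝ) : ℝ := deriv (fun ρ' => Pt b u r t v ρ') ρ


section Aux
variable (b u r t v ρ : ℝ)

lemma Pu_eq : Pu b u r t v ρ = 2 * (u - v) := by
  unfold Pu Phi
  have h1 : HasDerivAt (fun u' : ℝ => u' - v) 1 u := (hasDerivAt_id u).sub_const v
  have h : HasDerivAt (fun u' : ℝ => (u' - v) ^ 2 -
      (b / 2) ^ 2 * (4 * r ^ 2 * ρ ^ 2 - (r ^ 2 + ρ ^ 2 - t ^ 2) ^ 2))
      (2 * (u - v)) u := by
    simpa using (h1.fun_pow 2).sub_const ((b / 2) ^ 2 * (4 * r ^ 2 * ρ ^ 2 - (r ^ 2 + ρ ^ 2 - t ^ 2) ^ 2))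
  exact h.deriv

lemma Pr_eq : Pr b u r t v ρ = -(b ^ 2) * r * (t ^ 2 - r ^ 2 + ρ ^ 2) := by
  unfold Pr Phi
  have h1 : HasDerivAt (fun r' : ℝ => r' ^ 2) (2 * r) r := by
    simpa using (hasDerivAt_id r).fun_pow 2
  have h2 : HasDerivAt (fun r' : ℝ => 4 * r' ^ 2 * ρ ^ 2) (4 * (2 * r) * ρ ^ 2) r := by
    simpa [mul_comm, mul_assoc, mul_left_comm] using (h1.const_mul 4).mul_const (ρ ^ 2)
  have h3 : HasDerivAt (fun r' : ℝ => r' ^ 2 + ρ ^ 2 - t ^ 2) (2 * r) r :=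
    (h1.add_const _).sub_const _
  have h4 : HasDerivAt (fun r' : ℝ => (r' ^ 2 + ρ ^ 2 - t ^ 2) ^ 2)
      (2 * (r ^ 2 + ρ ^ 2 - t ^ 2) * (2 * r)) r := by
    simpa [pow_one] using h3.fun_pow 2
  have h : HasDerivAt (fun r' : ℝ => (u - v) ^ 2 -
      (b / 2) ^ 2 * (4 * r' ^ 2 * ρ ^ 2 - (r' ^ 2 + ρ ^ 2 - t ^ 2) ^ 2))
      (0 - (b / 2) ^ 2 * (4 * (2 * r) * ρ ^ 2 - 2 * (r ^ 2 + ρ ^ 2 - t ^ 2) * (2 * r))) r :=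
    (hasDerivAt_const r _).sub ((h2.sub h4).const_mul _)
  rw [h.deriv]; ring

lemma Pt_eq : Pt b u r t v ρ = b ^ 2 * t * (t ^ 2 - r ^ 2 - ρ ^ 2) := by
  unfold Pt Phi
  have h1 : HasDerivAt (fun t' : ℝ => t' ^ 2) (2 * t) t := by
    simpa using (hasDerivAt_id t).fun_pow 2
  have h3 : HasDerivAt (fun t' : ℝ => r ^ 2 + ρ ^ 2 - t' ^ 2) (-(2 * t)) t := by
    simpa using (hasDerivAt_const t (r ^ 2 + ρ ^ 2)).fun_sub h1
  have h4 : HasDerivAt (fun t' : ℝ => (r ^ 2 + ρ ^ 2 - t' ^ 2) ^ 2)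
      (2 * (r ^ 2 + ρ ^ 2 - t ^ 2) * -(2 * t)) t := by
    simpa [pow_one] using h3.fun_pow 2
  have h : HasDerivAt (fun t' : ℝ => (u - v) ^ 2 -
      (b / 2) ^ 2 * (4 * r ^ 2 * ρ ^ 2 - (r ^ 2 + ρ ^ 2 - t' ^ 2) ^ 2))
      (0 - (b / 2) ^ 2 * (0 - 2 * (r ^ 2 + ρ ^ 2 - t ^ 2) * -(2 * t))) t :=
    (hasDerivAt_const t _).sub (((hasDerivAt_const t _).sub h4).const_mul _)
  rw [h.deriv]; ring

lemma Pvu_eq : Pvu b u r t v ρ = -2 := by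
  unfold Pvu
  have : (fun v' => Pu b u r t v' ρ) = fun v' => 2 * (u - v') := by
    funext v'; exact Pu_eq b u r t v' ρ
  rw [this]
  have h : HasDerivAt (fun v' : ℝ => 2 * (u - v')) (2 * (0 - 1)) v :=
    ((hasDerivAt_const v u).sub (hasDerivAt_id v)).const_mul 2
  rw [h.deriv]; ring

lemma Pvr_eq : Pvr b u r t v ρ = 0 := by
  unfold Pvr
  have : (fun v' => Pr b u r t v' ρ) = fun _ => -(b ^ 2) * r * (t ^ 2 - r ^ 2 + ρ ^ 2) := by
    funext v'; exact Pr_eq b u r t v' ρ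
  rw [this, deriv_const]

lemma Pvt_eq : Pvt b u r t v ρ = 0 := by
  unfold Pvt
  have : (fun v' => Pt b u r t v' ρ) = fun _ => b ^ 2 * t * (t ^ 2 - r ^ 2 - ρ ^ 2) := by
    funext v'; exact Pt_eq b u r t v' ρ
  rw [this, deriv_const]

lemma Ppu_eq : Ppu b u r t v ρ = 0 := by
  unfold Ppu
  have : (fun ρ' => Pu b u r t v ρ') = fun _ => 2 * (u - v) := by
    funext ρ'; exact Pu_eq b u r t v ρ'
  rw [this, deriv_const]

lemma Ppr_eq : Ppr b u r t v ρ = -2 * b ^ 2 * r * ρ := by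
  unfold Ppr
  have : (fun ρ' => Pr b u r t v ρ') =
      fun ρ' => -(b ^ 2) * r * (t ^ 2 - r ^ 2 + ρ' ^ 2) := by
    funext ρ'; exact Pr_eq b u r t v ρ'
  rw [this]
  have h1 : HasDerivAt (fun ρ' : ℝ => ρ' ^ 2) (2 * ρ) ρ := by
    simpa using (hasDerivAt_id ρ).fun_pow 2
  have h : HasDerivAt (fun ρ' : ℝ => -(b ^ 2) * r * (t ^ 2 - r ^ 2 + ρ' ^ 2))
      (-(b ^ 2) * r * (0 + 2 * ρ)) ρ :=
    ((hasDerivAt_const ρ (t ^ 2 - r ^ 2)).add h1).const_mul _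
  rw [h.deriv]; ring

lemma Ppt_eq : Ppt b u r t v ρ = -2 * b ^ 2 * t * ρ := by
  unfold Ppt
  have : (fun ρ' => Pt b u r t v ρ') =
      fun ρ' => b ^ 2 * t * (t ^ 2 - r ^ 2 - ρ' ^ 2) := by
    funext ρ'; exact Pt_eq b u r t v ρ'
  rw [this]
  have h1 : HasDerivAt (fun ρ' : ℝ => ρ' ^ 2) (2 * ρ) ρ := by
    simpa using (hasDerivAt_id ρ).fun_pow 2
  have h : HasDerivAt (fun ρ' : ℝ => b ^ 2 * t * (t ^ 2 - r ^ 2 - ρ' ^ 2))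
      (b ^ 2 * t * (0 - 2 * ρ)) ρ :=
    ((hasDerivAt_const ρ (t ^ 2 - r ^ 2)).sub h1).const_mul _
  rw [h.deriv]; ring

end Aux

/-- On the zero set of Φ, the projection determinant
Proj(Φ) = det [∂_{(u,r,t)}Φ, ∂²_{(u,r,t),v}Φ, ∂²_{(u,r,t),ρ}Φ] equals −8b⁴rtρ(r²−t²). -/
theorem statement15 (b u r t v ρ : ℝ) (hΦ : Phi b u r t v ρ = 0) :
    (Matrix.transpose !![Pu b u r t v ρ, Pr b u r t v ρ, Pt b u r t v ρ;
                         Pvu b u r t v ρ, Pvr b u r t v ρ, Pvt b u r t v ρ;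
                         Ppu b u r t v ρ, Ppr b u r t v ρ, Ppt b u r t v ρ]).det
      = -8 * b ^ 4 * r * t * ρ * (r ^ 2 - t ^ 2) := by
  rw [Matrix.det_transpose, Matrix.det_fin_three]
  rw [Pu_eq, Pr_eq, Pt_eq, Pvu_eq, Pvr_eq, Pvt_eq, Ppu_eq, Ppr_eq, Ppt_eq]
  simp only [Matrix.cons_val', Matrix.cons_val_zero, Matrix.cons_val_one, Matrix.head_cons,
    Matrix.empty_val', Matrix.cons_val_fin_one, Matrix.cons_val_two, Matrix.tail_cons,
    Matrix.head_fin_const, Matrix.of_apply]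
  ring
end
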